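/- Let D = 𝔽₂(t) be the field of rational functions over 𝔽₂ (RatFunc (ZMod 2), t = RatFunc.X). For any A, B ∈ D there exists an additive function f : D → D with f(1) = A, f(t) = B, such that f(x) + x^2 * f(x⁻¹) = 0 for every nonzero x ∈ D (so the pair (f, g) with g = f satisfies the identity f(x) + x^2 * g(x⁻¹) = 0 for all nonzero x). -/

import Mathlib

set_option synthInstance.maxHeartbeats 1000000
set_option maxHeartbeats 1000000
noncomputable section

open RatFunc

abbrev D := RatFunc (ZMod 2)

instance : CharP D 2 := charP_of_injective_ringHom (algebraMap (ZMod 2) D).injective 2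

theorem RFX_ne_one : (RatFunc.X : D) ≠ 1 := by
  intro h
  have := RatFunc.intDegree_X (K := ZMod 2)
  rw [h, RatFunc.intDegree_one] at this
  omega

theorem X_not_square (y : D) : y * y ≠ RatFunc.X := by
  intro h
  have hy : y ≠ 0 := by rintro rfl; simp at h; exact RatFunc.X_ne_zero h.symm
  have := RatFunc.intDegree_mul hy hy
  rw [h, RatFunc.intDegree_X] at this
  omega

theorem stmt15 (A B : RatFunc (ZMod 2)) :
    ∃ f : RatFunc (ZMod 2) → RatFunc (ZMod 2),
      (∀ x y : RatFunc (ZMod 2), f (x + y) = f x + f y) ∧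
      f 1 = A ∧ f RatFunc.X = B ∧
      (∀ x : RatFunc (ZMod 2), x ≠ 0 → f x + x ^ 2 * f x⁻¹ = 0) := by
  classical
  set K : Subfield D := (frobenius D 2).fieldRange with hK
  have hsm : ∀ (k : K) (m : D), k • m = (k : D) * m := fun k m => rfl
  have hli : LinearIndependent K ![(1 : D), RatFunc.X] := by
    rw [LinearIndependent.pair_iff]
    intro s t h
    rw [hsm, hsm, mul_one] at h
    by_cases ht : t = 0
    · subst ht
      simp only [Subfield.coe_zero, zero_mul, add_zero] at h
      exact ⟨Subtype.ext h, rfl⟩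
    · exfalso
      obtain ⟨u, hu⟩ := s.2
      obtain ⟨v, hv⟩ := t.2
      have hv0 : v ≠ 0 := by
        rintro rfl; apply ht; apply Subtype.ext
        simpa using hv.symm
      -- X = s / t = (u/v)^2
      have hx : RatFunc.X = (u / v) * (u / v) := by
        have htne : (t : D) ≠ 0 := fun h0 => ht (Subtype.ext h0)
        field_simp
        have : (t : D) * RatFunc.X = -(s : D) := by linear_combination h
        rw [← hu, ← hv] at this
        simp only [frobenius_def] at this
        have hneg : -(u ^ 2) = u ^ 2 := by
          rw [CharTwo.neg_eq]
        linear_combination this + hneg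
      exact X_not_square _ hx.symm
  have hinj : Function.Injective ![(1 : D), RatFunc.X] := by
    intro i j hij
    fin_cases i <;> fin_cases j <;> simp_all <;>
      first
        | rfl
        | (exfalso; exact RFX_ne_one (by simp_all))
  have hli' : LinearIndepOn K id (Set.range ![(1 : D), RatFunc.X]) :=
    hli.linearIndepOn_id
  let b := Module.Basis.extend hli'
  have h1mem : (1 : D) ∈ hli'.extend (Set.subset_univ _) :=
    hli'.subset_extend _ ⟨0, rfl⟩
  have hXmem : (RatFunc.X : D) ∈ hli'.extend (Set.subset_univ _) :=
    hli'.subset_extend _ ⟨1, rfl⟩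
  let g : hli'.extend (Set.subset_univ _) → D := fun e =>
    if (e : D) = 1 then A else if (e : D) = RatFunc.X then B else 0
  let F := b.constr K g
  refine ⟨F, fun x y => F.map_add x y, ?_, ?_, ?_⟩
  · have := b.constr_basis K g ⟨(1 : D), h1mem⟩
    rw [Module.Basis.extend_apply_self] at this
    simpa [g] using this
  · have := b.constr_basis K g ⟨(RatFunc.X : D), hXmem⟩
    rw [Module.Basis.extend_apply_self] at this
    have hXne : (RatFunc.X : D) ≠ 1 := RFX_ne_one
    simpa [g, hXne] using this
  · intro x hx
    have hk : x⁻¹ * x⁻¹ ∈ K := ⟨x⁻¹, by simp [frobenius_def, sq]⟩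
    have h1 : (⟨x⁻¹ * x⁻¹, hk⟩ : K) • x = x⁻¹ := by
      rw [hsm]; field_simp
    have key : F x⁻¹ = x⁻¹ * x⁻¹ * F x := by
      conv_lhs => rw [← h1]
      rw [F.map_smul, hsm]
    rw [key]
    have hx2 : x ^ 2 * (x⁻¹ * x⁻¹ * F x) = F x := by
      field_simp
    rw [hx2, CharTwo.add_self_eq_zero]

end
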